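/- Let Γ be a countable group and Γ' ⊴ Γ a finite-index normal subgroup. If f ∈ ℤΓ is invertible in ℓ¹(Γ), then the set Fix(Γ', X_f) of points of X_f fixed by every element of Γ' is finite; indeed it is in bijection with X_f^{Γ'} := {x ∈ 𝕋^{Γ'\Γ} : x·f* = 0}, a closed subgroup of the finite-dimensional torus 𝕋^{Γ'\Γ} which is finite. -/

import Mathlib

open scoped BigOperators

/-- Convolution `(g·h)(γ) = ∑ β, g β * h (β⁻¹ γ)` of real functions. -/
noncomputable def convR {Γ : Type*} [Group Γ] (g h : Γ → ℝ) : Γ → ℝ :=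
  fun γ => ∑' β : Γ, g β * h (β⁻¹ * γ)

/-- Indicator of the identity. -/
def deltaE (Γ : Type*) [Group Γ] [DecidableEq Γ] : Γ → ℝ :=
  fun γ => if γ = 1 then 1 else 0

/-- The adjoint `f*` of `f ∈ ℤΓ`: `f*(γ) = f(γ⁻¹)`. -/
def fstar {Γ : Type*} [Group Γ] (f : Γ →₀ ℤ) : Γ →₀ ℤ :=
  Finsupp.equivMapDomain (Equiv.inv Γ) f

/-- Convolution of a `𝕋`-valued function with `g ∈ ℤΓ`:
`(x·g)(γ) = ∑ β, g(β) • x(γ β⁻¹)`. -/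
noncomputable def convT {Γ : Type*} [Group Γ] (x : Γ → AddCircle (1 : ℝ))
    (g : Γ →₀ ℤ) : Γ → AddCircle (1 : ℝ) :=
  fun γ => ∑ β ∈ g.support, g β • x (γ * β⁻¹)

section Aux

variable {Γ : Type*} [Group Γ] [DecidableEq Γ]

lemma fstar_apply (f : Γ →₀ ℤ) (γ : Γ) : fstar f γ = f γ⁻¹ := rfl

lemma sum_fstar_smul {M : Type*} [AddCommGroup M] (f : Γ →₀ ℤ) (w : Γ → M) (γ : Γ) :
    ∑ β ∈ (fstar f).support, (fstar f) β • w (γ * β⁻¹) = ∑ b ∈ f.support, f b • w (γ * b) := by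
  have hsupp : (fstar f).support = f.support.map (Equiv.inv Γ).toEmbedding := by
    ext a
    simp [Finset.mem_map_equiv, Finsupp.mem_support_iff, fstar_apply]
  rw [hsupp, Finset.sum_map]
  refine Finset.sum_congr rfl fun b _ => ?_
  simp [fstar_apply]

/-- reindexing equivalence σ ↦ a σ c -/
def shiftE (a c : Γ) : Γ ≃ Γ :=
  ⟨fun σ => a * σ * c, fun t => a⁻¹ * t * c⁻¹, fun σ => by group, fun t => by group⟩

/-- reindexing equivalence b ↦ τ b⁻¹ -/
def invShiftE (τ : Γ) : Γ ≃ Γ :=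
  ⟨fun b => τ * b⁻¹, fun t => t⁻¹ * τ, fun b => by group, fun t => by group⟩

/-- reindexing equivalence ρ ↦ ρ b -/
def mulRightE (b : Γ) : Γ ≃ Γ :=
  ⟨fun ρ => ρ * b, fun σ => σ * b⁻¹, fun ρ => by group, fun σ => by group⟩

lemma key_zero (f : Γ →₀ ℤ) (finv : Γ → ℝ)
    (hfinv : Summable fun γ => ‖finv γ‖)
    (h2 : convR finv (fun γ => (f γ : ℝ)) = deltaE Γ)
    (z : Γ → ℝ) (C : ℝ) (hC : ∀ γ, |z γ| ≤ C)
    (hz : ∀ ρ, ∑ b ∈ f.support, (f b : ℝ) * z (ρ * b) = 0) (γ : Γ) :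
    z γ = 0 := by

  have hdelta : ∀ τ : Γ, ∑ b ∈ f.support, (f b : ℝ) * finv (τ * b⁻¹) = deltaE Γ τ := by
    intro τ
    have h := congrFun h2 τ
    simp only [convR] at h
    rw [← Equiv.tsum_eq (invShiftE τ) (fun β => finv β * ((f (β⁻¹ * τ) : ℤ) : ℝ))] at h
    simp only [invShiftE, Equiv.coe_fn_mk, mul_inv_rev, inv_inv, inv_mul_cancel_right] at h
    calc ∑ b ∈ f.support, (f b : ℝ) * finv (τ * b⁻¹)
        = ∑ b ∈ f.support, finv (τ * b⁻¹) * (f b : ℝ) :=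
          Finset.sum_congr rfl fun b _ => mul_comm _ _
      _ = ∑' b : Γ, finv (τ * b⁻¹) * (f b : ℝ) :=
          (tsum_eq_sum (s := f.support)
            (f := fun b : Γ => finv (τ * b⁻¹) * (f b : ℝ)) fun b hb => by
            simp [Finsupp.notMem_support_iff.mp hb]).symm
      _ = deltaE Γ τ := h
  have hfb : ∀ a c : Γ, Summable fun σ : Γ => ‖finv (a * σ * c)‖ := by
    intro a c
    have h : Summable ((fun t => ‖finv t‖) ∘ (shiftE a c)) :=
      (Equiv.summable_iff (shiftE a c)).mpr hfinv
    simpa [Function.comp_def, shiftE] using h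
  have hsummand : ∀ b ∈ f.support,
      Summable fun σ : Γ => z σ * ((f b : ℝ) * finv (γ⁻¹ * σ * b⁻¹)) := by
    intro b _
    refine Summable.of_norm_bounded
      ((hfb γ⁻¹ b⁻¹).mul_left (C * |(f b : ℝ)|)) fun σ => ?_
    show _ ≤ (C * |(f b : ℝ)|) * ‖finv (γ⁻¹ * σ * b⁻¹)‖
    have hA : (0:ℝ) ≤ ‖finv (γ⁻¹ * σ * b⁻¹)‖ := norm_nonneg _
    have h1 : ‖z σ * ((f b : ℝ) * finv (γ⁻¹ * σ * b⁻¹))‖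
        = |z σ| * (|(f b : ℝ)| * ‖finv (γ⁻¹ * σ * b⁻¹)‖) := by
      simp [Real.norm_eq_abs, abs_mul]
    rw [h1, ← mul_assoc]
    exact mul_le_mul_of_nonneg_right
      (mul_le_mul_of_nonneg_right (hC σ) (abs_nonneg _)) hA
  have hsummand2 : ∀ b ∈ f.support,
      Summable fun ρ : Γ => z (ρ * b) * ((f b : ℝ) * finv (γ⁻¹ * ρ)) := by
    intro b hb
    have := ((mulRightE b).summable_iff (f := fun σ : Γ =>
      z σ * ((f b : ℝ) * finv (γ⁻¹ * σ * b⁻¹)))).mpr (hsummand b hb)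
    refine this.congr fun ρ => ?_
    simp only [mulRightE, Equiv.coe_fn_mk, Function.comp]
    rw [show γ⁻¹ * (ρ * b) * b⁻¹ = γ⁻¹ * ρ by group]
  calc z γ = ∑' σ : Γ, z σ * deltaE Γ (γ⁻¹ * σ) := by
        rw [tsum_eq_single γ]
        · simp [deltaE]
        · intro σ hσ
          have h1 : γ⁻¹ * σ ≠ 1 := fun h => hσ (by
            have := congrArg (fun t => γ * t) h
            simpa [mul_assoc] using this)
          simp [deltaE, h1]
    _ = ∑' σ : Γ, ∑ b ∈ f.support, z σ * ((f b : ℝ) * finv (γ⁻¹ * σ * b⁻¹)) := by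
        refine tsum_congr fun σ => ?_
        rw [← hdelta (γ⁻¹ * σ), Finset.mul_sum]
    _ = ∑ b ∈ f.support, ∑' σ : Γ, z σ * ((f b : ℝ) * finv (γ⁻¹ * σ * b⁻¹)) :=
        Summable.tsum_finsetSum hsummand
    _ = ∑ b ∈ f.support, ∑' ρ : Γ, z (ρ * b) * ((f b : ℝ) * finv (γ⁻¹ * ρ)) := by
        refine Finset.sum_congr rfl fun b _ => ?_
        rw [← Equiv.tsum_eq (mulRightE b)
          (fun σ => z σ * ((f b : ℝ) * finv (γ⁻¹ * σ * b⁻¹)))]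
        refine tsum_congr fun ρ => ?_
        simp only [mulRightE, Equiv.coe_fn_mk]
        rw [show γ⁻¹ * (ρ * b) * b⁻¹ = γ⁻¹ * ρ by group]
    _ = ∑' ρ : Γ, ∑ b ∈ f.support, z (ρ * b) * ((f b : ℝ) * finv (γ⁻¹ * ρ)) :=
        (Summable.tsum_finsetSum hsummand2).symm
    _ = ∑' ρ : Γ, (∑ b ∈ f.support, (f b : ℝ) * z (ρ * b)) * finv (γ⁻¹ * ρ) := by
        refine tsum_congr fun ρ => ?_
        rw [Finset.sum_mul]
        exact Finset.sum_congr rfl fun b _ => by ring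
    _ = 0 := by simp [hz]

end Aux

/-- If `Γ' ⊴ Γ` has finite index and `f ∈ ℤΓ` is invertible in `ℓ¹(Γ)`, then the
set `Fix(Γ', X_f)` of `Γ'`-fixed points of `X_f` is finite, and is in bijection
with `X_f^{Γ'} = {x ∈ 𝕋^{Γ'\Γ} : x·f* = 0}`. -/
theorem stmt6 {Γ : Type*} [Group Γ] [Countable Γ] [DecidableEq Γ]
    (Γ' : Subgroup Γ) [Γ'.Normal] [Γ'.FiniteIndex]
    (f : Γ →₀ ℤ) (finv : Γ → ℝ)
    (hfinv : Summable fun γ => ‖finv γ‖)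
    (h1 : convR (fun γ => (f γ : ℝ)) finv = deltaE Γ)
    (h2 : convR finv (fun γ => (f γ : ℝ)) = deltaE Γ) :
    Set.Finite {x : Γ → AddCircle (1 : ℝ) |
        (∀ γ, convT x (fstar f) γ = 0) ∧ ∀ g ∈ Γ', ∀ γ, x (g⁻¹ * γ) = x γ} ∧
    Nonempty
      ({x : Γ → AddCircle (1 : ℝ) |
          (∀ γ, convT x (fstar f) γ = 0) ∧ ∀ g ∈ Γ', ∀ γ, x (g⁻¹ * γ) = x γ} ≃
        {ψ : Quotient (QuotientGroup.rightRel Γ') → AddCircle (1 : ℝ) |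
          ∀ γ, convT (fun g => ψ (Quotient.mk (QuotientGroup.rightRel Γ') g))
            (fstar f) γ = 0}) := by
  classical
  haveI : Fact ((0:ℝ) < 1) := ⟨zero_lt_one⟩
  haveI : Finite (Quotient (QuotientGroup.rightRel Γ')) :=
    Finite.of_equiv _ (QuotientGroup.quotientRightRelEquivQuotientLeftRel Γ').symm
  constructor
  · -- Finiteness
    set lft : AddCircle (1:ℝ) → ℝ :=
      fun u => ((AddCircle.equivIco 1 0 u : Set.Ico (0:ℝ) (0+1)) : ℝ) with hlft
    have hlft_coe : ∀ u : AddCircle (1:ℝ), ((lft u : ℝ) : AddCircle (1:ℝ)) = u :=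
      fun u => (AddCircle.equivIco 1 0).symm_apply_apply u
    have hlft0 : ∀ u, 0 ≤ lft u := fun u => (AddCircle.equivIco 1 0 u).2.1
    have hlft1 : ∀ u, lft u < 1 := fun u => by
      have := (AddCircle.equivIco 1 0 u).2.2
      simpa using this
    set Cm : (Γ → AddCircle (1:ℝ)) → Γ → ℝ :=
      fun x γ => ∑ b ∈ f.support, (f b : ℝ) * lft (x (γ * b)) with hCm
    have hconv : ∀ (x : Γ → AddCircle (1:ℝ)) (γ : Γ),
        convT x (fstar f) γ = ∑ b ∈ f.support, f b • x (γ * b) := by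
      intro x γ
      simp only [convT]
      exact sum_fstar_smul f x γ
    have coe_sum : ∀ (s : Finset Γ) (F : Γ → ℝ),
        ((∑ b ∈ s, F b : ℝ) : AddCircle (1:ℝ)) = ∑ b ∈ s, ((F b : ℝ) : AddCircle (1:ℝ)) := by
      intro s F
      induction s using Finset.induction with
      | empty => simp
      | insert a s h ih => rw [Finset.sum_insert h, Finset.sum_insert h, AddCircle.coe_add, ih]
    have h_int : ∀ x : Γ → AddCircle (1:ℝ), (∀ γ, convT x (fstar f) γ = 0) →
        ∀ γ, ∃ n : ℤ, (n : ℝ) = Cm x γ := by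
      intro x hx γ
      have hcast : ((Cm x γ : ℝ) : AddCircle (1:ℝ)) = 0 := by
        rw [hCm]
        rw [coe_sum]
        have : ∀ b ∈ f.support,
            (((f b : ℝ) * lft (x (γ * b)) : ℝ) : AddCircle (1:ℝ)) = f b • x (γ * b) := by
          intro b _
          rw [← zsmul_eq_mul, AddCircle.coe_zsmul, hlft_coe]
        rw [Finset.sum_congr rfl this, ← hconv x γ, hx γ]
      rcases (AddCircle.coe_eq_zero_iff (p := (1:ℝ))).mp hcast with ⟨n, hn⟩
      exact ⟨n, by simpa using hn⟩
    have h_bd : ∀ (x : Γ → AddCircle (1:ℝ)) (γ : Γ),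
        |Cm x γ| ≤ ∑ b ∈ f.support, |(f b : ℝ)| := by
      intro x γ
      refine (Finset.abs_sum_le_sum_abs _ _).trans (Finset.sum_le_sum fun b _ => ?_)
      rw [abs_mul]
      have h1 : |lft (x (γ * b))| ≤ 1 := by
        rw [abs_of_nonneg (hlft0 _)]
        exact (hlft1 _).le
      calc |(f b : ℝ)| * |lft (x (γ * b))| ≤ |(f b : ℝ)| * 1 :=
            mul_le_mul_of_nonneg_left h1 (abs_nonneg _)
        _ = |(f b : ℝ)| := mul_one _
    have h_invC : ∀ x ∈ {x : Γ → AddCircle (1 : ℝ) |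
        (∀ γ, convT x (fstar f) γ = 0) ∧ ∀ g ∈ Γ', ∀ γ, x (g⁻¹ * γ) = x γ},
        ∀ g ∈ Γ', ∀ γ, Cm x (g * γ) = Cm x γ := by
      intro x hx g hg γ
      refine Finset.sum_congr rfl fun b _ => ?_
      have hx' : x (g * (γ * b)) = x (γ * b) := by
        have := hx.2 g⁻¹ (inv_mem hg) (γ * b)
        simpa using this
      rw [show g * γ * b = g * (γ * b) by group, hx']
    set Φ : (Γ → AddCircle (1:ℝ)) → (Quotient (QuotientGroup.rightRel Γ') → ℝ) :=
      fun x q => Cm x q.out with hΦ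
    have h_out : ∀ x ∈ {x : Γ → AddCircle (1 : ℝ) |
        (∀ γ, convT x (fstar f) γ = 0) ∧ ∀ g ∈ Γ', ∀ γ, x (g⁻¹ * γ) = x γ},
        ∀ γ : Γ, Cm x γ = Φ x (Quotient.mk (QuotientGroup.rightRel Γ') γ) := by
      intro x hx γ
      have hrel := Quotient.mk_out (s := QuotientGroup.rightRel Γ') γ
      rw [QuotientGroup.rightRel_apply] at hrel
      set o := (Quotient.mk (QuotientGroup.rightRel Γ') γ).out with ho
      have : Cm x ((γ * o⁻¹) * o) = Cm x o := h_invC x hx _ hrel o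
      rw [show γ * o⁻¹ * o = γ by group] at this
      exact this
    -- finite image
    have hN : ∃ N : ℤ, ∀ (x : Γ → AddCircle (1:ℝ)) (γ : Γ), |Cm x γ| ≤ (N : ℝ) := by
      refine ⟨⌈∑ b ∈ f.support, |(f b : ℝ)|⌉, fun x γ => (h_bd x γ).trans (Int.le_ceil _)⟩
    obtain ⟨N, hNbd⟩ := hN
    have himfin : (Φ '' {x : Γ → AddCircle (1 : ℝ) |
        (∀ γ, convT x (fstar f) γ = 0) ∧ ∀ g ∈ Γ', ∀ γ, x (g⁻¹ * γ) = x γ}).Finite := by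
      have hVfin : ((fun n : ℤ => (n : ℝ)) '' (Set.Icc (-N) N)).Finite :=
        (Set.finite_Icc _ _).image _
      refine Set.Finite.subset (Set.Finite.pi fun _ => hVfin) ?_
      rintro v ⟨x, hx, rfl⟩
      intro q _
      obtain ⟨n, hn⟩ := h_int x hx.1 q.out
      refine ⟨n, ?_, hn⟩
      have habs : |(n : ℝ)| ≤ (N : ℝ) := by rw [hn]; exact hNbd x q.out
      rw [← Int.cast_abs, Int.cast_le] at habs
      exact Set.mem_Icc.mpr (abs_le.mp habs)
    refine Set.Finite.of_finite_image himfin ?_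
    intro x hx y hy hxy
    have hCmeq : ∀ γ, Cm x γ = Cm y γ := by
      intro γ
      rw [h_out x hx γ, h_out y hy γ, hxy]
    have hz0 : ∀ γ, lft (x γ) - lft (y γ) = 0 := by
      intro γ
      refine key_zero f finv hfinv h2 (fun γ => lft (x γ) - lft (y γ)) 2 ?_ ?_ γ
      · intro γ
        rw [abs_sub_le_iff]
        constructor <;>
          linarith [hlft0 (x γ), hlft1 (x γ), hlft0 (y γ), hlft1 (y γ)]
      · intro ρ
        have : ∑ b ∈ f.support, (f b : ℝ) * (lft (x (ρ * b)) - lft (y (ρ * b)))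
            = Cm x ρ - Cm y ρ := by
          rw [hCm, ← Finset.sum_sub_distrib]
          exact Finset.sum_congr rfl fun b _ => by ring
        rw [this, hCmeq, sub_self]
    funext γ
    have := sub_eq_zero.mp (hz0 γ)
    calc x γ = ((lft (x γ) : ℝ) : AddCircle (1:ℝ)) := (hlft_coe _).symm
      _ = ((lft (y γ) : ℝ) : AddCircle (1:ℝ)) := by rw [this]
      _ = y γ := hlft_coe _
  · -- the equivalence
    have hresp : ∀ x : ↥{x : Γ → AddCircle (1 : ℝ) |
        (∀ γ, convT x (fstar f) γ = 0) ∧ ∀ g ∈ Γ', ∀ γ, x (g⁻¹ * γ) = x γ},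
        ∀ a b : Γ, (QuotientGroup.rightRel Γ') a b → x.1 a = x.1 b := by
      intro x a b hab
      have hab' : b * a⁻¹ ∈ Γ' := QuotientGroup.rightRel_apply.mp hab
      have := x.2.2 (b * a⁻¹) hab' b
      rw [show (b * a⁻¹)⁻¹ * b = a by group] at this
      exact this
    have hmkinv : ∀ (ψ : ↥{ψ : Quotient (QuotientGroup.rightRel Γ') → AddCircle (1 : ℝ) |
          ∀ γ, convT (fun g => ψ (Quotient.mk (QuotientGroup.rightRel Γ') g))
            (fstar f) γ = 0}), ∀ g ∈ Γ', ∀ γ : Γ,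
        ψ.1 (Quotient.mk (QuotientGroup.rightRel Γ') (g⁻¹ * γ))
          = ψ.1 (Quotient.mk (QuotientGroup.rightRel Γ') γ) := by
      intro ψ g hg γ
      have : Quotient.mk (QuotientGroup.rightRel Γ') (g⁻¹ * γ)
          = Quotient.mk (QuotientGroup.rightRel Γ') γ := by
        refine Quotient.sound (QuotientGroup.rightRel_apply.mpr ?_)
        rw [show γ * (g⁻¹ * γ)⁻¹ = g by group]
        exact hg
      rw [this]
    exact ⟨⟨fun x => ⟨Quotient.lift x.1 (hresp x), fun γ => x.2.1 γ⟩,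
      fun ψ => ⟨fun γ => ψ.1 (Quotient.mk (QuotientGroup.rightRel Γ') γ),
        ψ.2, fun g hg γ => hmkinv ψ g hg γ⟩,
      fun x => Subtype.ext rfl,
      fun ψ => Subtype.ext (funext fun q => Quotient.inductionOn q fun g => rfl)⟩⟩
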